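/- Let v be a binary vector of length n ≥ 1 with m(v) ≥ 1. Let a(v) be the unique integer with 1 ≤ a(v) < 2^n such that 2^n divides 3^{m(v)}·a(v) + 1, and let b(v) = (3^{m(v)}·a(v) + 1)/2^n. Set X(v) = P(v)·a(v) and Y(v) = P(v)·b(v). Then the parity vector of length n of X(v) equals v, and T^n(X(v)) = Y(v). (Paper's Theorem 4.6.) -/

import Mathlib

/-- The Collatz map `T`. -/
def collatzT (N : ℕ) : ℕ := if N % 2 = 0 then N / 2 else (3 * N + 1) / 2

/-- The parity vector of length `n` of `N`: entry `k` is `true` iff `T^[k] N` is odd. -/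
def parityVec (N n : ℕ) : List Bool :=
  (List.range n).map (fun k => decide ((collatzT^[k] N) % 2 = 1))

/-- `m(v)`: the number of ones of a binary vector. -/
def mOnes (v : List Bool) : ℕ := v.count true

/-- `P(v)`: the characteristic number of a binary vector,
`P(v) = Σ_{k=1}^{m} 3^(m-k) * 2^(j_k - 1)` where `j_1 < … < j_m` are the positions of ones. -/
def Pchar : List Bool → ℕ
  | [] => 0
  | e :: rest => (if e then 3 ^ mOnes rest else 0) + 2 * Pchar rest

lemma parityVec_succ (N n : ℕ) :
    parityVec N (n+1) = decide (N % 2 = 1) :: parityVec (collatzT N) n := by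
  unfold parityVec
  rw [List.range_succ_eq_map, List.map_cons, List.map_map]
  simp [Function.iterate_succ_apply, Function.comp]
  exact ⟨rfl, fun _ _ => rfl⟩

lemma mOnes_cons (e : Bool) (rest : List Bool) :
    mOnes (e :: rest) = (if e then 1 else 0) + mOnes rest := by
  cases e <;> simp [mOnes, Nat.add_comm]

lemma terras (n : ℕ) : ∀ N, 2^n * collatzT^[n] N
    = 3 ^ mOnes (parityVec N n) * N + Pchar (parityVec N n) := by
  induction n with
  | zero => intro N; simp [parityVec, mOnes, Pchar]
  | succ k ih =>
    intro N
    rw [parityVec_succ, Function.iterate_succ_apply, pow_succ, mul_comm (2^k) 2,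
      mul_assoc, ih (collatzT N)]
    by_cases h : N % 2 = 0
    · obtain ⟨q, hq⟩ := Nat.even_iff.mpr h
      subst hq
      have hT : collatzT (q + q) = q := by
        simp only [collatzT, h, if_true]
        omega
      rw [hT]
      simp only [h, decide_eq_true_eq]
      norm_num [mOnes_cons, Pchar]
      ring
    · have h1 : N % 2 = 1 := Nat.mod_two_eq_zero_or_one N |>.resolve_left h
      obtain ⟨q, hq⟩ := Nat.odd_iff.mpr h1
      subst hq
      have hT : collatzT (2*q + 1) = 3*q + 2 := by
        simp only [collatzT]
        have : (2*q+1) % 2 = 1 := by omega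
        rw [if_neg (by omega)]
        omega
      rw [hT]
      have : (2*q+1) % 2 = 1 := by omega
      simp only [this, decide_eq_true_eq]
      norm_num [mOnes_cons, Pchar, pow_succ]
      ring

lemma half_modEq {x y k : ℕ} (hx : x % 2 = 0) (hy : y % 2 = 0)
    (h : x ≡ y [MOD 2^(k+1)]) : x / 2 ≡ y / 2 [MOD 2^k] := by
  obtain ⟨a, rfl⟩ : 2 ∣ x := Nat.dvd_of_mod_eq_zero hx
  obtain ⟨b, rfl⟩ : 2 ∣ y := Nat.dvd_of_mod_eq_zero hy
  rw [Nat.mul_div_cancel_left _ two_pos, Nat.mul_div_cancel_left _ two_pos]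
  have hg : Nat.gcd (2^(k+1)) 2 = 2 := Nat.gcd_eq_right ⟨2^k, by ring⟩
  have := Nat.ModEq.cancel_left_div_gcd (c := 2) (m := 2^(k+1)) (by positivity) h
  rwa [hg, pow_succ, Nat.mul_div_cancel _ two_pos] at this

lemma parityVec_mod (n : ℕ) : ∀ N M, N % 2^n = M % 2^n → parityVec N n = parityVec M n := by
  induction n with
  | zero => intro N M _; simp [parityVec]
  | succ k ih =>
    intro N M h
    have h2 : N % 2 = M % 2 :=
      Nat.ModEq.of_dvd (⟨2^k, by ring⟩ : (2:ℕ) ∣ 2^(k+1)) h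
    rw [parityVec_succ, parityVec_succ, h2]
    congr 1
    apply ih
    by_cases hN : N % 2 = 0
    · have hM : M % 2 = 0 := h2 ▸ hN
      simp only [collatzT, hN, hM, if_true]
      exact half_modEq hN hM h
    · have hN1 : N % 2 = 1 := Nat.mod_two_eq_zero_or_one N |>.resolve_left hN
      have hM1 : M % 2 = 1 := h2 ▸ hN1
      simp only [collatzT]
      rw [if_neg (by omega), if_neg (by omega)]
      have hmod : N ≡ M [MOD 2^(k+1)] := h
      have h3 : 3*N+1 ≡ 3*M+1 [MOD 2^(k+1)] := (hmod.mul_left 3).add_right 1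
      exact half_modEq (by omega) (by omega) h3

lemma lemB : ∀ (v : List Bool) (a : ℕ), 2 ^ v.length ∣ 3 ^ mOnes v * a + 1 →
    parityVec (Pchar v * a) v.length = v := by
  intro v
  induction v with
  | nil => intro a _; simp [parityVec]
  | cons e rest ih =>
    intro a hdvd
    simp only [List.length_cons] at hdvd ⊢
    have ha : a % 2 = 1 := by
      obtain ⟨c, hc⟩ := hdvd
      have h2 : (3 ^ mOnes (e :: rest) * a + 1) % 2 = 0 := by
        have : (2:ℕ) ∣ 3 ^ mOnes (e :: rest) * a + 1 :=
          ⟨2^(rest.length) * c, by rw [hc]; ring⟩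
        omega
      have h3 : (3:ℕ) ^ mOnes (e :: rest) % 2 = 1 := by
        rw [Nat.pow_mod]; norm_num
      have h4 : (3 ^ mOnes (e :: rest) * a) % 2 = a % 2 % 2 := by
        rw [Nat.mul_mod, h3, one_mul]
      omega
    cases e with
    | false =>
      have hm : mOnes (false :: rest) = mOnes rest := by simp [mOnes_cons]
      have hP : Pchar (false :: rest) = 2 * Pchar rest := by simp [Pchar]
      rw [parityVec_succ, hP]
      have hx : 2 * Pchar rest * a % 2 = 0 := by
        rw [mul_assoc]; exact Nat.mul_mod_right 2 _
      have hT : collatzT (2 * Pchar rest * a) = Pchar rest * a := by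
        simp only [collatzT, hx, if_true]
        rw [mul_assoc, Nat.mul_div_cancel_left _ two_pos]
      rw [hT, ih a (dvd_trans ⟨2, by ring⟩ (hm ▸ hdvd))]
      simp [hx]
    | true =>
      have hm : mOnes (true :: rest) = mOnes rest + 1 := by
        simp [mOnes_cons]; omega
      have hP : Pchar (true :: rest) = 3 ^ mOnes rest + 2 * Pchar rest := by
        simp [Pchar]
      obtain ⟨c, hc⟩ := hdvd
      rw [hm, pow_succ, pow_succ] at hc
      rw [parityVec_succ, hP]
      have hodd : (3 ^ mOnes rest + 2 * Pchar rest) * a % 2 = 1 := by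
        have e1 : (3 ^ mOnes rest + 2 * Pchar rest) * a
            = 3 ^ mOnes rest * a + 2 * (Pchar rest * a) := by ring
        have h3 : (3:ℕ) ^ mOnes rest % 2 = 1 := by rw [Nat.pow_mod]; norm_num
        have h4 : (3 ^ mOnes rest * a) % 2 = a % 2 % 2 := by
          rw [Nat.mul_mod, h3, one_mul]
        omega
      have key : 3 * ((3 ^ mOnes rest + 2 * Pchar rest) * a) + 1
          = 2 * (2 ^ rest.length * c + 3 * (Pchar rest * a)) := by
        linear_combination hc
      have hT : collatzT ((3 ^ mOnes rest + 2 * Pchar rest) * a)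
          = 2 ^ rest.length * c + 3 * (Pchar rest * a) := by
        simp only [collatzT]
        rw [if_neg (by omega), key, Nat.mul_div_cancel_left _ two_pos]
      have hih : parityVec (Pchar rest * (3 * a)) rest.length = rest := by
        apply ih
        exact ⟨2 * c, by linear_combination hc⟩
      have hmod : parityVec (2 ^ rest.length * c + 3 * (Pchar rest * a)) rest.length
          = parityVec (Pchar rest * (3 * a)) rest.length := by
        apply parityVec_mod
        rw [add_comm, Nat.add_mul_mod_self_left]
        congr 1
        ring
      rw [hT, hmod, hih]
      simp [hodd]

/-- Paper's Theorem 4.6: with a(v) the unique integer in [1, 2^n) such that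
`2^n ∣ 3^(m v) * a(v) + 1` and `b(v) = (3^(m v) * a(v) + 1) / 2^n`, the point
`X(v) = P v * a v` realizes v as its parity vector of length n, and
`T^[n] (X v) = Y v = P v * b v`. -/
theorem stmt_9 (n : ℕ) (hn : 1 ≤ n) (v : List Bool) (hv : v.length = n)
    (hm : 1 ≤ mOnes v) (a b : ℕ) (ha1 : 1 ≤ a) (ha2 : a < 2 ^ n)
    (hab : 3 ^ mOnes v * a + 1 = 2 ^ n * b) :
    parityVec (Pchar v * a) n = v ∧
      collatzT^[n] (Pchar v * a) = Pchar v * b := by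
  subst hv
  have h1 : parityVec (Pchar v * a) v.length = v :=
    lemB v a ⟨b, hab⟩
  refine ⟨h1, ?_⟩
  have h2 := terras v.length (Pchar v * a)
  rw [h1] at h2
  have h3 : 2 ^ v.length * collatzT^[v.length] (Pchar v * a)
      = 2 ^ v.length * (Pchar v * b) := by
    rw [h2]
    calc 3 ^ mOnes v * (Pchar v * a) + Pchar v
        = Pchar v * (3 ^ mOnes v * a + 1) := by ring
      _ = Pchar v * (2 ^ v.length * b) := by rw [hab]
      _ = 2 ^ v.length * (Pchar v * b) := by ring
  exact Nat.eq_of_mul_eq_mul_left (by positivity) h3
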